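/- The composite of two winning strategies is winning: if σ : A ⇒ B and τ : B ⇒ C are winning, then for every s ∈ σ;τ with 𝒢_A(s↾A) = W one has 𝒢_C(s↾C) = W. -/

import Mathlib

inductive WL | W | L
deriving DecidableEq

open Classical

/-- A finite or infinite play. -/
def PlaySeq (X : Type*) : Type _ := List X ⊕ (ℕ → X)

/-- Restriction of an infinite sequence along a partial projection `p`: if only finitely
many moves are kept, the result is the finite list of kept moves in order; otherwise it is
the infinite subsequence of kept moves. -/
noncomputable def restrictSeq {X Y : Type*} (u : ℕ → X) (p : X → Option Y) : PlaySeq Y :=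
  if h : {n | (p (u n)).isSome}.Finite then
    .inl ((h.toFinset.sort (· ≤ ·)).filterMap fun n => p (u n))
  else
    .inr fun k =>
      (p (u (Nat.nth (fun n => (p (u n)).isSome) k))).getD
        (Classical.choice (by
          have h' : {n | (p (u n)).isSome}.Infinite := h
          obtain ⟨n, hn⟩ := h'.nonempty
          exact ⟨(p (u n)).get hn⟩))

/-- Restriction of a (finite or infinite) play along a partial projection. -/
noncomputable def restrictPlay {X Y : Type*} (s : PlaySeq X) (p : X → Option Y) :
    PlaySeq Y :=
  match s with
  | .inl l => .inl (l.filterMap p)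
  | .inr u => restrictSeq u p

/-- The finite prefix of length `n` of an infinite sequence. -/
def prefixList {X : Type*} (u : ℕ → X) (n : ℕ) : List X := (List.range n).map u

/-- Membership of a (finite or infinite) play in a strategy `σ` (a set of finite plays):
an infinite play belongs to `σ` when all its even-length finite prefixes do. -/
def memP {M : Type*} (σ : Set (List M)) : PlaySeq M → Prop
  | .inl l => l ∈ σ
  | .inr u => ∀ n, Even n → prefixList u n ∈ σ

/-- The winning function of an arrow game `A ⇒ B`: a play is winning iff winningness of
its restriction to `A` implies winningness of its restriction to `B`. -/
noncomputable def arrowWin {A B : Type*} (GA : PlaySeq A → WL) (GB : PlaySeq B → WL)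
    (s : PlaySeq (A ⊕ B)) : WL :=
  if GA (restrictPlay s Sum.getLeft?) = WL.W then GB (restrictPlay s Sum.getRight?)
  else WL.W

section Interaction

variable {MA MB MC : Type*}

/-- Projections of interaction moves to the various components. -/
def pA : MA ⊕ MB ⊕ MC → Option MA
  | .inl a => some a
  | _ => none

def pC : MA ⊕ MB ⊕ MC → Option MC
  | .inr (.inr c) => some c
  | _ => none

def pAB : MA ⊕ MB ⊕ MC → Option (MA ⊕ MB)
  | .inl a => some (.inl a)
  | .inr (.inl b) => some (.inr b)
  | _ => none

def pBC : MA ⊕ MB ⊕ MC → Option (MB ⊕ MC)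
  | .inr (.inl b) => some (.inl b)
  | .inr (.inr c) => some (.inr c)
  | _ => none

def pAC {MA MB MC : Type*} : MA ⊕ MB ⊕ MC → Option (MA ⊕ MC)
  | .inl a => some (.inl a)
  | .inr (.inr c) => some (.inr c)
  | _ => none





/-- count is constant on an interval with no elements of q. -/
lemma count_eq_of_no (q : ℕ → Prop) {a b : ℕ} (hab : a ≤ b)
    (h : ∀ x, a ≤ x → x < b → ¬ q x) : Nat.count q b = Nat.count q a := by
  classical
  rw [Nat.count_eq_card_filter_range, Nat.count_eq_card_filter_range]
  congr 1
  ext x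
  simp only [Finset.mem_filter, Finset.mem_range]
  constructor
  · rintro ⟨hx, hq⟩
    refine ⟨?_, hq⟩
    by_contra hxa
    exact h x (le_of_not_gt hxa) hx hq
  · rintro ⟨hx, hq⟩
    exact ⟨hx.trans_le hab, hq⟩

lemma count_le_count_of_imp (p q : ℕ → Prop) (h : ∀ n, q n → p n) (n : ℕ) :
    Nat.count q n ≤ Nat.count p n := by
  classical
  rw [Nat.count_eq_card_filter_range, Nat.count_eq_card_filter_range]
  exact Finset.card_le_card (Finset.monotone_filter_right _ fun n _ => h n)

lemma count_nth_eq (p q : ℕ → Prop) (hp : (setOf p).Infinite) (hq : ∀ n, q n → p n) (m : ℕ) :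
    Nat.count q (Nat.nth p m) = Nat.count (fun k => q (Nat.nth p k)) m := by
  classical
  induction m with
  | zero =>
    simp only [Nat.count_zero]
    have h1 := count_le_count_of_imp p q hq (Nat.nth p 0)
    rw [Nat.count_nth_of_infinite hp 0] at h1
    omega
  | succ m ih =>
    have hlt : Nat.nth p m < Nat.nth p (m + 1) := (Nat.nth_lt_nth hp).2 (Nat.lt_succ_self m)
    have h1 : Nat.count q (Nat.nth p (m + 1)) = Nat.count q (Nat.nth p m + 1) := by
      refine count_eq_of_no q hlt ?_
      intro x hx1 hx2 hqx
      have := Nat.le_nth_of_lt_nth_succ hx2 (hq x hqx)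
      omega
    rw [h1, Nat.count_succ, ih, Nat.count_succ]

lemma nth_nth (p q : ℕ → Prop) (hp : (setOf p).Infinite) (hq : ∀ n, q n → p n)
    (hK : (setOf fun k => q (Nat.nth p k)).Infinite) (j : ℕ) :
    Nat.nth q j = Nat.nth p (Nat.nth (fun k => q (Nat.nth p k)) j) := by
  classical
  set K : ℕ → Prop := fun k => q (Nat.nth p k) with hKdef
  have hm : K (Nat.nth K j) := Nat.nth_mem_of_infinite hK j
  have hcount : Nat.count q (Nat.nth p (Nat.nth K j)) = j := by
    rw [count_nth_eq p q hp hq, Nat.count_nth_of_infinite hK]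
  calc Nat.nth q j = Nat.nth q (Nat.count q (Nat.nth p (Nat.nth K j))) := by rw [hcount]
    _ = Nat.nth p (Nat.nth K j) := Nat.nth_count hm



lemma filterMap_eq_filterMap_filter {α β : Type*} (f : α → Option β) (l : List α) :
    l.filterMap f = (l.filter fun a => (f a).isSome).filterMap f := by
  induction l with
  | nil => simp
  | cons a l ih =>
    by_cases h : (f a).isSome
    · obtain ⟨b, hb⟩ := Option.isSome_iff_exists.mp h
      simp [List.filter_cons, h, List.filterMap_cons, hb, ih]
    · simp only [Option.not_isSome_iff_eq_none] at h
      simp [List.filter_cons, h, List.filterMap_cons, ih]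

lemma sort_filter_eq {S T : Set ℕ} (hS : S.Finite) (hT : T.Finite) (g : ℕ → Bool)
    (h : ∀ n, n ∈ T ↔ n ∈ S ∧ g n) :
    (hS.toFinset.sort (· ≤ ·)).filter g = hT.toFinset.sort (· ≤ ·) := by
  refine (fun hp hs => List.Perm.eq_of_pairwise' hs (Finset.pairwise_sort _ _) hp) ?_ ?_
  · rw [List.perm_ext_iff_of_nodup ((Finset.sort_nodup _ _).filter g) (Finset.sort_nodup _ _)]
    intro a
    simp only [List.mem_filter, Finset.mem_sort, Set.Finite.mem_toFinset, h]
  · exact (Finset.pairwise_sort _ _).filter g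

lemma map_sort_eq (p : ℕ → Prop) (hp : (setOf p).Infinite) {K T : Set ℕ}
    (hK : K.Finite) (hT : T.Finite)
    (h1 : ∀ k, k ∈ K ↔ Nat.nth p k ∈ T) (h2 : ∀ x, x ∈ T → p x) :
    (hK.toFinset.sort (· ≤ ·)).map (Nat.nth p) = hT.toFinset.sort (· ≤ ·) := by
  refine (fun hp hs => List.Perm.eq_of_pairwise' hs (Finset.pairwise_sort _ _) hp) ?_ ?_
  · rw [List.perm_ext_iff_of_nodup
      ((Finset.sort_nodup _ _).map (Nat.nth_injective hp)) (Finset.sort_nodup _ _)]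
    intro a
    simp only [List.mem_map, Finset.mem_sort, Set.Finite.mem_toFinset]
    constructor
    · rintro ⟨k, hk, rfl⟩
      exact (h1 k).1 hk
    · intro ha
      have hpa : p a := h2 a ha
      obtain ⟨k, rfl⟩ : a ∈ Set.range (Nat.nth p) := by
        rw [Nat.range_nth_of_infinite hp]; exact hpa
      exact ⟨k, (h1 k).2 ha, rfl⟩
  · rw [List.pairwise_map]
    exact (Finset.pairwise_sort _ _).imp fun h => Nat.nth_monotone hp h

lemma restrictSeq_finite {X Y : Type*} (v : ℕ → X) (p : X → Option Y)
    (h : {n | (p (v n)).isSome}.Finite) :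
    restrictSeq v p = .inl ((h.toFinset.sort (· ≤ ·)).filterMap fun n => p (v n)) := by
  rw [restrictSeq]; exact dif_pos h

lemma restrictSeq_infinite {X Y : Type*} (v : ℕ → X) (p : X → Option Y)
    (h : ¬ {n | (p (v n)).isSome}.Finite) :
    ∃ w : ℕ → Y, restrictSeq v p = .inr w ∧
      ∀ k, p (v (Nat.nth (fun n => (p (v n)).isSome) k)) = some (w k) := by
  unfold restrictSeq; erw [dif_neg h]
  refine ⟨_, rfl, fun k => ?_⟩
  have h' : {n | (p (v n)).isSome}.Infinite := h
  have hs : (p (v (Nat.nth (fun n => (p (v n)).isSome) k))).isSome :=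
    Nat.nth_mem_of_infinite h' k
  obtain ⟨a, ha⟩ := Option.isSome_iff_exists.mp hs
  simp [ha]

lemma restrict_comp {X Y Z : Type*} (u : PlaySeq X) (p : X → Option Y) (q : Y → Option Z) :
    restrictPlay (restrictPlay u p) q = restrictPlay u (fun x => (p x).bind q) := by
  cases u with
  | inl l => simp [restrictPlay, List.filterMap_filterMap]; rfl
  | inr v =>
    show restrictPlay (restrictSeq v p) q = restrictSeq v (fun x => (p x).bind q)
    have hTP : ∀ n : ℕ, ((p (v n)).bind q).isSome → (p (v n)).isSome := by
      intro n hn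
      cases hp : p (v n) with
      | none => rw [hp] at hn; simp at hn
      | some a => simp [hp]
    by_cases hS : {n | (p (v n)).isSome}.Finite
    · have hT : {n | (((fun x => (p x).bind q) (v n))).isSome}.Finite :=
        hS.subset (fun n hn => hTP n hn)
      rw [restrictSeq_finite v p hS, restrictSeq_finite v _ hT]
      show Sum.inl _ = (Sum.inl _ : PlaySeq Z)
      congr 1
      rw [List.filterMap_filterMap]
      rw [filterMap_eq_filterMap_filter (fun x => (p (v x)).bind q) (hS.toFinset.sort (· ≤ ·))]
      rw [sort_filter_eq hS hT (fun n => ((p (v n)).bind q).isSome)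
        (fun n => ⟨fun hn => ⟨hTP n hn, hn⟩, fun hn => hn.2⟩)]
    · have hS' : {n | (p (v n)).isSome}.Infinite := hS
      obtain ⟨w, hw, hwp⟩ := restrictSeq_infinite v p hS
      rw [hw]
      show restrictSeq w q = restrictSeq v (fun x => (p x).bind q)
      set P : ℕ → Prop := fun n => ((p (v n)).isSome : Prop) with hPdef
      have hqw : ∀ k, q (w k) = (p (v (Nat.nth P k))).bind q := by
        intro k
        rw [hwp k]; rfl
      by_cases hT : {n | (((fun x => (p x).bind q) (v n))).isSome}.Finite
      · -- composed projection keeps finitely many moves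
        have hKeq : {k | (q (w k)).isSome} =
            Nat.nth P ⁻¹' {n | ((p (v n)).bind q).isSome} := by
          ext k; simp only [Set.mem_setOf_eq, Set.mem_preimage, hqw k]
        have hKfin : {k | (q (w k)).isSome}.Finite := by
          rw [hKeq]
          exact hT.preimage (Nat.nth_injective hS').injOn
        rw [restrictSeq_finite w q hKfin, restrictSeq_finite v _ hT]
        congr 1
        have hfun : (fun k => q (w k)) =
            (fun x => (p (v x)).bind q) ∘ Nat.nth P := by
          funext k; exact hqw k
        rw [hfun, ← List.filterMap_map]
        rw [map_sort_eq P hS' hKfin hT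
          (fun k => by simp only [Set.mem_setOf_eq, hqw k])
          (fun n hn => hTP n hn)]
      · -- composed projection keeps infinitely many moves
        have hKinf : ¬ {k | (q (w k)).isSome}.Finite := by
          intro hKfin
          apply hT
          have hsub : {n | ((p (v n)).bind q).isSome} ⊆
              Nat.nth P '' {k | (q (w k)).isSome} := by
            intro n hn
            have hnP : P n := hTP n hn
            obtain ⟨k, hk⟩ : n ∈ Set.range (Nat.nth P) := by
              rw [Nat.range_nth_of_infinite hS']; exact hnP
            refine ⟨k, ?_, hk⟩
            simp only [Set.mem_setOf_eq, hqw k, hk]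
            exact hn
          exact (hKfin.image _).subset hsub
        obtain ⟨w1, hw1, hw1p⟩ := restrictSeq_infinite w q hKinf
        obtain ⟨w2, hw2, hw2p⟩ := restrictSeq_infinite v (fun x => (p x).bind q) hT
        rw [hw1, hw2]
        congr 1
        funext j
        set T : ℕ → Prop := fun n => (((p (v n)).bind q).isSome : Prop) with hTdef
        have hKpred : (fun k => ((q (w k)).isSome : Prop)) = fun k => T (Nat.nth P k) := by
          funext k
          simp only [hTdef, hqw k]
        have hKinf' : (setOf fun k => T (Nat.nth P k)).Infinite := by
          rw [← hKpred]; exact hKinf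
        have hnn := nth_nth P T hS' (fun n hn => hTP n hn) hKinf' j
        have hidx : Nat.nth (fun k => ((q (w k)).isSome : Prop)) j =
            Nat.nth (fun k => T (Nat.nth P k)) j := by rw [hKpred]
        have e1 : some (w1 j) = q (w (Nat.nth (fun k => ((q (w k)).isSome : Prop)) j)) :=
          (hw1p j).symm
        have e2 : some (w2 j) = (p (v (Nat.nth T j))).bind q := (hw2p j).symm
        have : some (w1 j) = some (w2 j) := by
          rw [e1, e2, hidx, hqw, ← hnn]
        exact Option.some.inj this

lemma pAB_getLeft {MA MB MC : Type*} :
    (fun x : MA ⊕ MB ⊕ MC => (pAB x).bind Sum.getLeft?) = pA := by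
  funext x; rcases x with a | b | c <;> rfl

lemma pAB_getRight {MA MB MC : Type*} :
    (fun x : MA ⊕ MB ⊕ MC => (pAB x).bind Sum.getRight?) =
      (fun x : MA ⊕ MB ⊕ MC => (pBC x).bind Sum.getLeft?) := by
  funext x; rcases x with a | b | c <;> rfl

lemma pBC_getRight {MA MB MC : Type*} :
    (fun x : MA ⊕ MB ⊕ MC => (pBC x).bind Sum.getRight?) = pC := by
  funext x; rcases x with a | b | c <;> rfl

lemma pAC_getLeft {MA MB MC : Type*} :
    (fun x : MA ⊕ MB ⊕ MC => (pAC x).bind Sum.getLeft?) = pA := by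
  funext x; rcases x with a | b | c <;> rfl

lemma pAC_getRight {MA MB MC : Type*} :
    (fun x : MA ⊕ MB ⊕ MC => (pAC x).bind Sum.getRight?) = pC := by
  funext x; rcases x with a | b | c <;> rfl

theorem composite_winning'
    {MA MB MC : Type*}
    (GA : PlaySeq MA → WL) (GB : PlaySeq MB → WL) (GC : PlaySeq MC → WL)
    (σ : Set (List (MA ⊕ MB))) (τ : Set (List (MB ⊕ MC)))
    (hσwin : ∀ pl, memP σ pl → arrowWin GA GB pl = WL.W)
    (hτwin : ∀ pl, memP τ pl → arrowWin GB GC pl = WL.W) :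
    ∀ (u : PlaySeq (MA ⊕ MB ⊕ MC)) (s : PlaySeq (MA ⊕ MC)),
      memP σ (restrictPlay u pAB) → memP τ (restrictPlay u pBC) →
      s = restrictPlay u pAC →
      GA (restrictPlay s Sum.getLeft?) = WL.W →
      GC (restrictPlay s Sum.getRight?) = WL.W := by
  intro u s hσ hτ hs hGA
  have hσW := hσwin _ hσ
  have hτW := hτwin _ hτ
  rw [hs, restrict_comp, pAC_getLeft] at hGA
  rw [hs, restrict_comp, pAC_getRight]
  unfold arrowWin at hσW hτW
  rw [restrict_comp, restrict_comp, pAB_getLeft, pAB_getRight, if_pos hGA] at hσW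
  rw [restrict_comp, restrict_comp, pBC_getRight, if_pos hσW] at hτW
  exact hτW

/-- The composite of two winning strategies is winning: if `σ : A ⇒ B` and `τ : B ⇒ C`
are winning, then for every play `s ∈ σ;τ` — i.e. every restriction `s = u↾(A,C)` of an
interaction `u ∈ σ‖τ` — if `𝒢_A(s↾A) = W` then `𝒢_C(s↾C) = W`. -/
theorem composite_winning
    (GA : PlaySeq MA → WL) (GB : PlaySeq MB → WL) (GC : PlaySeq MC → WL)
    (σ : Set (List (MA ⊕ MB))) (τ : Set (List (MB ⊕ MC)))
    (hσwin : ∀ pl, memP σ pl → arrowWin GA GB pl = WL.W)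
    (hτwin : ∀ pl, memP τ pl → arrowWin GB GC pl = WL.W) :
    ∀ (u : PlaySeq (MA ⊕ MB ⊕ MC)) (s : PlaySeq (MA ⊕ MC)),
      memP σ (restrictPlay u pAB) → memP τ (restrictPlay u pBC) →
      s = restrictPlay u pAC →
      GA (restrictPlay s Sum.getLeft?) = WL.W →
      GC (restrictPlay s Sum.getRight?) = WL.W :=
  composite_winning' GA GB GC σ τ hσwin hτwin

end Interaction
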